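/- Let T be a tree, i.e. a simple graph on a vertex set V that is connected and acyclic, and let d be the graph metric on V (d(u,v) is the length of the shortest path from u to v). Then asdim(V,d) ≤ 1, and asdim(V,d) = 1 if and only if (V,d) is unbounded. -/

import Mathlib

open SimpleGraph Walk

namespace AsdimTreeAux

variable {V : Type*} {G : SimpleGraph V}

/-- Prefix of a walk (first `n` darts). -/
def wtake {u v : V} : (p : G.Walk u v) → (n : ℕ) → G.Walk u (p.getVert n)
  | .nil, _ => .nil
  | .cons _ _, 0 => .nil
  | .cons h q, n + 1 => .cons h (wtake q n)

/-- Suffix of a walk (dropping the first `n` darts). -/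
def wdrop {u v : V} : (p : G.Walk u v) → (n : ℕ) → G.Walk (p.getVert n) v
  | .nil, _ => .nil
  | .cons h q, 0 => .cons h q
  | .cons _ q, n + 1 => wdrop q n

@[simp] lemma length_wtake {u v : V} (p : G.Walk u v) (n : ℕ) :
    (wtake p n).length = min n p.length := by
  induction p generalizing n with
  | nil => simp [wtake]
  | cons h q ih =>
    cases n with
    | zero => simp [wtake]; rfl
    | succ n => show (wtake q n).length + 1 = _; simp only [wtake, Walk.length_cons, ih]; omega

@[simp] lemma length_wdrop {u v : V} (p : G.Walk u v) (n : ℕ) :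
    (wdrop p n).length = p.length - n := by
  induction p generalizing n with
  | nil => simp [wdrop]
  | cons h q ih =>
    cases n with
    | zero => simp [wdrop]; rfl
    | succ n => show (wdrop q n).length = _; simp only [wdrop, Walk.length_cons, ih]; omega

lemma getVert_wtake {u v : V} (p : G.Walk u v) (n i : ℕ) :
    (wtake p n).getVert i = p.getVert (min i n) := by
  induction p generalizing n i with
  | nil => rfl
  | cons h q ih =>
    cases n with
    | zero =>
      simp only [wtake, Nat.min_zero]
      cases i <;> rfl
    | succ n =>
      cases i with
      | zero => rfl
      | succ i =>
        simp only [wtake, Walk.getVert_cons_succ, ih, Nat.succ_min_succ]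

lemma getVert_wdrop {u v : V} (p : G.Walk u v) (n i : ℕ) :
    (wdrop p n).getVert i = p.getVert (n + i) := by
  induction p generalizing n i with
  | nil => rfl
  | cons h q ih =>
    cases n with
    | zero => rw [Nat.zero_add]; rfl
    | succ n =>
      simp only [wdrop, Walk.getVert_cons_succ, ih, Nat.succ_add]

lemma wtake_append_wdrop {u v : V} (p : G.Walk u v) (n : ℕ) :
    (wtake p n).append (wdrop p n) = p := by
  induction p generalizing n with
  | nil => cases n <;> rfl
  | cons h q ih =>
    cases n with
    | zero => rfl
    | succ n => show Walk.cons h ((wtake q n).append (wdrop q n)) = _; rw [ih]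

lemma isPath_wtake {u v : V} (p : G.Walk u v) (n : ℕ) (hp : p.IsPath) :
    (wtake p n).IsPath := by
  have h : ((wtake p n).append (wdrop p n)).IsPath := by rwa [wtake_append_wdrop]
  exact h.of_append_left

lemma isPath_wdrop {u v : V} (p : G.Walk u v) (n : ℕ) (hp : p.IsPath) :
    (wdrop p n).IsPath := by
  have h : ((wtake p n).append (wdrop p n)).IsPath := by rwa [wtake_append_wdrop]
  exact h.of_append_right

lemma dist_getVert_left {u v : V} (p : G.Walk u v) (n : ℕ) :
    G.dist u (p.getVert n) ≤ n :=
  le_trans (SimpleGraph.dist_le (wtake p n)) (by simp)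

lemma dist_getVert_right {u v : V} (p : G.Walk u v) (n : ℕ) :
    G.dist (p.getVert n) v ≤ p.length - n :=
  le_trans (SimpleGraph.dist_le (wdrop p n)) (by simp)

lemma path_eq (hT : G.IsTree) {a b : V} {q q' : G.Walk a b} (h1 : q.IsPath) (h2 : q'.IsPath) :
    q = q' := by
  have := isAcyclic_iff_path_unique.mp hT.IsAcyclic (⟨q, h1⟩ : G.Path a b) ⟨q', h2⟩
  exact congrArg Subtype.val this

lemma agree (hT : G.IsTree) {r : V} (p : ∀ v, G.Walk r v) (hp : ∀ v, (p v).IsPath)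
    (hl : ∀ v, (p v).length = G.dist r v) {x y : V} {i j : ℕ}
    (hi : i ≤ G.dist r x) (hj : j ≤ G.dist r y)
    (h : (p x).getVert i = (p y).getVert j) :
    i = j ∧ ∀ a, a ≤ i → (p x).getVert a = (p y).getVert a := by
  have e : wtake (p x) i = (wtake (p y) j).copy rfl h.symm :=
    path_eq hT (isPath_wtake _ _ (hp x))
      (by rw [Walk.isPath_copy]; exact isPath_wtake _ _ (hp y))
  have h1 : (wtake (p x) i).length = i := by rw [length_wtake, hl]; omega
  have h2 : ((wtake (p y) j).copy rfl h.symm).length = j := by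
    rw [Walk.length_copy, length_wtake, hl]; omega
  have hij : i = j := by rw [← h1, ← h2, e]
  refine ⟨hij, fun a ha => ?_⟩
  calc (p x).getVert a = (wtake (p x) i).getVert a := by rw [getVert_wtake]; congr 1; omega
    _ = ((wtake (p y) j).copy rfl h.symm).getVert a := by rw [e]
    _ = (wtake (p y) j).getVert a := Walk.getVert_copy _ _ _ _
    _ = (p y).getVert a := by rw [getVert_wtake]; congr 1; omega

lemma key (hT : G.IsTree) {r : V} (p : ∀ v, G.Walk r v) (hp : ∀ v, (p v).IsPath)
    (hl : ∀ v, (p v).length = G.dist r v) {x y : V} {a : ℕ}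
    (h : 2 * a + G.dist x y ≤ G.dist r x + G.dist r y) :
    (p x).getVert a = (p y).getVert a := by
  classical
  have hc := hT.isConnected
  have htri : G.dist r y ≤ G.dist r x + G.dist x y := hc.dist_triangle
  have htri2 : G.dist r x ≤ G.dist r y + G.dist x y := by
    have h2 := hc.dist_triangle (u := r) (v := y) (w := x)
    rwa [SimpleGraph.dist_comm (u := y) (v := x)] at h2
  set Q : ℕ → Prop := fun b => (p x).getVert b = (p y).getVert b with hQdef
  set g := Nat.findGreatest Q (min (G.dist r x) (G.dist r y)) with hgdef
  have hQ0 : Q 0 := by simp only [Q, Walk.getVert_zero]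
  have hgQ : Q g := Nat.findGreatest_spec (Nat.zero_le _) hQ0
  have hgle : g ≤ min (G.dist r x) (G.dist r y) := Nat.findGreatest_le _
  have hgx : g ≤ G.dist r x := le_trans hgle (min_le_left _ _)
  have hgy : g ≤ G.dist r y := le_trans hgle (min_le_right _ _)
  have hgQ' : (p x).getVert g = (p y).getVert g := hgQ
  set W : G.Walk x y :=
    (wdrop (p x) g).reverse.append ((wdrop (p y) g).copy hgQ'.symm rfl) with hWdef
  have hWlen : W.length = (G.dist r x - g) + (G.dist r y - g) := by
    simp [hWdef, Walk.length_append, Walk.length_reverse, Walk.length_copy,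
      length_wdrop, hl x, hl y]
  have hWpath : W.IsPath := by
    rw [Walk.isPath_def, hWdef, Walk.support_append, List.nodup_append]
    refine ⟨((isPath_wdrop _ _ (hp x)).reverse).support_nodup, ?_, ?_⟩
    · rw [Walk.support_copy]
      exact (isPath_wdrop (p y) g (hp y)).support_nodup.tail
    · intro z hz1 z' hz2 hzz; subst hzz
      rw [Walk.support_reverse, List.mem_reverse] at hz1
      rw [Walk.support_copy] at hz2
      obtain ⟨i, hzi, hile⟩ := Walk.mem_support_iff_exists_getVert.mp hz1
      rw [getVert_wdrop] at hzi
      rw [length_wdrop, hl x] at hile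
      have hz2' : z ∈ (wdrop (p y) g).support := by
        rw [Walk.support_eq_cons]
        exact List.mem_cons_of_mem _ hz2
      obtain ⟨j, hzj, hjle⟩ := Walk.mem_support_iff_exists_getVert.mp hz2'
      rw [getVert_wdrop] at hzj
      rw [length_wdrop, hl y] at hjle
      have hne : z ≠ (p y).getVert g := by
        have hnd := (isPath_wdrop (p y) g (hp y)).support_nodup
        rw [Walk.support_eq_cons] at hnd
        intro hzeq
        exact (List.nodup_cons.mp hnd).1 (hzeq ▸ hz2)
      have hag := agree hT p hp hl (x := x) (y := y)
        (by omega : g + i ≤ G.dist r x) (by omega : g + j ≤ G.dist r y)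
        (by rw [hzi, hzj])
      obtain ⟨hij, hagr⟩ := hag
      rcases Nat.eq_zero_or_pos i with h0 | h1
      · have hj0 : j = 0 := by omega
        apply hne
        rw [← hzj, hj0, Nat.add_zero]
      · have hQg1 : Q (g + 1) := hagr (g + 1) (by omega)
        exact Nat.findGreatest_is_greatest (by omega : g < g + 1)
          (by omega : g + 1 ≤ min (G.dist r x) (G.dist r y)) hQg1
  obtain ⟨P0, hP0, hP0len⟩ := hc.exists_path_of_dist x y
  have hWP0 : W = P0 := path_eq hT hWpath hP0
  have hd : G.dist x y = (G.dist r x - g) + (G.dist r y - g) := by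
    rw [← hP0len, ← hWP0, hWlen]
  have hag : a ≤ g := by omega
  exact (agree hT p hp hl hgx hgy hgQ').2 a hag

end AsdimTreeAux

open AsdimTreeAux

/-- `asdim ≤ n` for a set equipped with a distance function `d`: for every `L > 0`
there are `D > 0` and a cover `𝒰` with multiplicity at most `n + 1`, Lebesgue
number at least `L` and mesh at most `D`. -/
def DistAsdimLE {V : Type*} (d : V → V → ℝ) (n : ℕ) : Prop :=
  ∀ L : ℝ, 0 < L → ∃ D : ℝ, 0 < D ∧ ∃ 𝒰 : Set (Set V),
    (∀ x : V, ∃ U ∈ 𝒰, x ∈ U) ∧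
    (∀ x : V, {U | U ∈ 𝒰 ∧ x ∈ U}.encard ≤ ((n : ℕ∞) + 1)) ∧
    (∀ x : V, ∃ U ∈ 𝒰, {y | d x y < L} ⊆ U) ∧
    (∀ U ∈ 𝒰, ∀ x ∈ U, ∀ y ∈ U, d x y ≤ D)

/-- A tree with its graph metric has asymptotic dimension at most `1`, with
equality iff it is unbounded. -/
theorem asdim_of_tree {V : Type*} (G : SimpleGraph V) (hT : G.IsTree) :
    DistAsdimLE (fun u v => (G.dist u v : ℝ)) 1 ∧
    ((DistAsdimLE (fun u v => (G.dist u v : ℝ)) 1 ∧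
        ¬ DistAsdimLE (fun u v => (G.dist u v : ℝ)) 0) ↔
      ¬ ∃ C : ℝ, ∀ u v : V, (G.dist u v : ℝ) ≤ C) := by
  have hc := hT.isConnected
  have hne : Nonempty V := hc.nonempty
  obtain ⟨r⟩ := hne
  have hex : ∀ v, ∃ q : G.Walk r v, q.IsPath ∧ q.length = G.dist r v :=
    fun v => hc.exists_path_of_dist r v
  choose p hp hl using hex
  have main : DistAsdimLE (fun u v => (G.dist u v : ℝ)) 1 := by
    intro L hL
    set R := ⌈L⌉₊ with hR
    have hR1 : 1 ≤ R := Nat.ceil_pos.mpr hL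
    set H := 2 * R with hH
    have hH0 : 0 < H := by omega
    set P : ℕ → V → Set V := fun j u =>
      {v | j * H ≤ G.dist r v ∧ G.dist r v < j * H + 2 * H ∧ (p v).getVert (j * H) = u}
      with hPdef
    refine ⟨((4 * H : ℕ) : ℝ), by positivity, {S | ∃ j u, S = P j u}, ?_, ?_, ?_, ?_⟩
    · -- cover
      intro x
      refine ⟨P (G.dist r x / H) ((p x).getVert (G.dist r x / H * H)),
        ⟨_, _, rfl⟩, ?_, ?_, rfl⟩
      · exact Nat.div_mul_le_self _ _
      · have := Nat.lt_div_mul_add (a := G.dist r x) hH0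
        omega
    · -- multiplicity
      intro x
      set j1 := G.dist r x / H with hj1
      have hsub : {U | U ∈ {S | ∃ j u, S = P j u} ∧ x ∈ U} ⊆
          {P j1 ((p x).getVert (j1 * H)), P (j1 - 1) ((p x).getVert ((j1 - 1) * H))} := by
        rintro S ⟨⟨j, u, rfl⟩, hx1, hx2, hx3⟩
        have hj1' : j ≤ j1 := (Nat.le_div_iff_mul_le hH0).mpr hx1
        have hj2 : j1 < j + 2 := by
          rw [hj1, Nat.div_lt_iff_lt_mul hH0]
          calc G.dist r x < j * H + 2 * H := hx2
            _ = (j + 2) * H := by ring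
        have : j = j1 ∨ j = j1 - 1 := by omega
        rcases this with h | h
        · exact Set.mem_insert_iff.mpr (Or.inl (by rw [← hx3, h]))
        · exact Set.mem_insert_iff.mpr (Or.inr (Set.mem_singleton_iff.mpr (by rw [← hx3, h])))
      refine le_trans (Set.encard_mono hsub) (le_trans (Set.encard_insert_le _ _) ?_)
      simp
    · -- Lebesgue number
      intro x
      have hLR : L ≤ (R : ℝ) := Nat.le_ceil L
      by_cases hq : G.dist r x < R
      · refine ⟨P 0 ((p x).getVert 0), ⟨0, _, rfl⟩, ?_⟩
        intro y hy
        simp only [Set.mem_setOf_eq] at hy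
        have hdy : G.dist x y < R := by exact_mod_cast hy.trans_le hLR
        have htr : G.dist r y ≤ G.dist r x + G.dist x y := hc.dist_triangle
        refine ⟨by simp, ?_, ?_⟩
        · rw [Nat.zero_mul]; omega
        · rw [Nat.zero_mul, Walk.getVert_zero, Walk.getVert_zero]
      · push_neg at hq
        set j := (G.dist r x - (R - 1)) / H with hj
        set A := j * H with hA
        refine ⟨P j ((p x).getVert A), ⟨j, _, rfl⟩, ?_⟩
        have h1 : A ≤ G.dist r x - (R - 1) := Nat.div_mul_le_self _ _
        have h2 : G.dist r x - (R - 1) < A + H := by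
          rw [hA, hj]
          exact Nat.lt_div_mul_add hH0
        intro y hy
        simp only [Set.mem_setOf_eq] at hy
        have hdy : G.dist x y < R := by exact_mod_cast hy.trans_le hLR
        have ht1 : G.dist r y ≤ G.dist r x + G.dist x y := hc.dist_triangle
        have ht2 : G.dist r x ≤ G.dist r y + G.dist x y := by
          have h3 := hc.dist_triangle (u := r) (v := y) (w := x)
          rwa [SimpleGraph.dist_comm (u := y) (v := x)] at h3
        refine ⟨by omega, by omega, ?_⟩
        apply key hT p hp hl
        have hxy : G.dist y x = G.dist x y := SimpleGraph.dist_comm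
        omega
    · -- mesh
      rintro S ⟨j, u, rfl⟩ v hv w hw
      obtain ⟨hv1, hv2, hv3⟩ := hv
      obtain ⟨hw1, hw2, hw3⟩ := hw
      set A := j * H with hA
      have e1 : G.dist u v ≤ 2 * H := by
        rw [← hv3]
        have h := dist_getVert_right (p v) A
        rw [hl v] at h
        omega
      have e2 : G.dist u w ≤ 2 * H := by
        rw [← hw3]
        have h := dist_getVert_right (p w) A
        rw [hl w] at h
        omega
      have htr : G.dist v w ≤ G.dist v u + G.dist u w := hc.dist_triangle
      have hvu : G.dist v u = G.dist u v := SimpleGraph.dist_comm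
      have : G.dist v w ≤ 4 * H := by omega
      exact_mod_cast Nat.cast_le.mpr this
  refine ⟨main, ?_, ?_⟩
  · rintro ⟨-, h0⟩ ⟨C, hC⟩
    apply h0
    intro L hL
    refine ⟨max C 1, lt_of_lt_of_le zero_lt_one (le_max_right _ _), {Set.univ},
      ?_, ?_, ?_, ?_⟩
    · intro x; exact ⟨Set.univ, rfl, trivial⟩
    · intro x
      have he : {U | U ∈ ({Set.univ} : Set (Set V)) ∧ x ∈ U} = {Set.univ} := by
        ext U; simp +contextual [Set.mem_singleton_iff]
      rw [he, Set.encard_singleton]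
      simp
    · intro x; exact ⟨Set.univ, rfl, fun y _ => trivial⟩
    · rintro U rfl x - y -
      exact (hC x y).trans (le_max_left _ _)
  · intro hub
    refine ⟨main, fun h0 => ?_⟩
    obtain ⟨D, hD, 𝒰, hcov, hmul, hleb, hdiam⟩ := h0 2 (by norm_num)
    obtain ⟨U0, hU0, hrU0⟩ := hcov r
    have hall : ∀ n, ∀ v, G.dist r v ≤ n → v ∈ U0 := by
      intro n
      induction n with
      | zero =>
        intro v hv
        have hv0 : G.dist r v = 0 := Nat.le_zero.mp hv
        have : r = v := (hc.dist_eq_zero_iff).mp hv0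
        rwa [← this]
      | succ n ih =>
        intro v hv
        rcases Nat.lt_or_ge (G.dist r v) (n + 1) with h | h
        · exact ih v (by omega)
        · have hdist : G.dist r v = n + 1 := le_antisymm hv h
          set w := (p v).getVert n with hw
          have hw_dist : G.dist r w ≤ n := dist_getVert_left (p v) n
          have hlen : n < (p v).length := by rw [hl v, hdist]; omega
          have hgv : (p v).getVert (n + 1) = v := by
            rw [show n + 1 = (p v).length by rw [hl v, hdist]]
            exact Walk.getVert_length _
          have hadj : G.Adj w v := by
            have := (p v).adj_getVert_succ hlen
            rwa [hgv] at this
          obtain ⟨U', hU', hballU'⟩ := hleb w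
          have hwU' : w ∈ U' := by
            apply hballU'
            simp only [Set.mem_setOf_eq, SimpleGraph.dist_self]
            norm_num
          have hwU0 : w ∈ U0 := ih w hw_dist
          have hUU : U0 = U' := by
            have hcard := hmul w
            have h1 : ({U | U ∈ 𝒰 ∧ w ∈ U}).encard ≤ 1 := by simpa using hcard
            exact Set.encard_le_one_iff.mp h1 U0 U' ⟨hU0, hwU0⟩ ⟨hU', hwU'⟩
          have hvU' : v ∈ U' := by
            apply hballU'
            simp only [Set.mem_setOf_eq]
            have : G.dist w v ≤ 1 := SimpleGraph.dist_le (Walk.cons hadj Walk.nil)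
            have : (G.dist w v : ℝ) ≤ 1 := by exact_mod_cast this
            linarith
          rw [hUU]; exact hvU'
    exact hub ⟨D, fun u v => hdiam U0 hU0 u (hall _ u le_rfl) v (hall _ v le_rfl)⟩
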